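/- Let V be a finite type of variables and Ψ a BST⁺ formula over V that has a model. Then for all x, y : V there exists a model M of Ψ such that M x ∉ M y. -/

import Mathlib

/-- BST⁺ formulae over a variable type `V`: atoms `x = y \ z` combined with
conjunction, disjunction and negation. -/
inductive BSTFormula (V : Type*) : Type _
  | atom : V → V → V → BSTFormula V
  | and  : BSTFormula V → BSTFormula V → BSTFormula V
  | or   : BSTFormula V → BSTFormula V → BSTFormula V
  | not  : BSTFormula V → BSTFormula V

/-- Satisfaction of a BST⁺ formula by a set assignment. -/
def BSTFormula.Satisfies {V : Type*} (M : V → ZFSet) : BSTFormula V → Prop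
  | .atom x y z => M x = M y \ M z
  | .and f g    => f.Satisfies M ∧ g.Satisfies M
  | .or f g     => f.Satisfies M ∨ g.Satisfies M
  | .not f      => ¬ f.Satisfies M

/-- An assignment `M : V → ZFSet` is `b`-flat if every member of every value of `M`
has rank exactly `b`. -/
def IsFlat {V : Type*} (b : Ordinal) (M : V → ZFSet) : Prop :=
  ∀ v : V, ∀ u : ZFSet, u ∈ M v → u.rank = b

universe w u

/-- von Neumann-like injections of naturals into any ZFSet universe. -/
def vN : ℕ → ZFSet.{w}
  | 0 => ∅
  | n + 1 => insert (vN n) (vN n)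

theorem vN_mem : ∀ {m n : ℕ}, m < n → vN.{w} m ∈ vN.{w} n := by
  intro m n h
  induction n with
  | zero => omega
  | succ n ih =>
    rcases Nat.lt_succ_iff_lt_or_eq.mp h with h' | h'
    · exact ZFSet.mem_insert_iff.mpr (Or.inr (ih h'))
    · rw [h']; exact ZFSet.mem_insert _ _

theorem vN_inj : Function.Injective vN.{w} := by
  intro a b h
  rcases lt_trichotomy a b with h' | h' | h'
  · exact absurd (h ▸ vN_mem h') (ZFSet.mem_irrefl _)
  · exact h'
  · exact absurd (h ▸ vN_mem h') (ZFSet.mem_irrefl _)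

/-- The nonempty "Venn types" occupied by an assignment. -/
def typesOf {V : Type*} (N : V → ZFSet.{w}) : Set (Set V) :=
  {S | S.Nonempty ∧ ∃ u : ZFSet.{w}, ∀ v, u ∈ N v ↔ v ∈ S}

theorem atom_iff_types {V : Type*} (N : V → ZFSet.{w}) (x y z : V) :
    N x = N y \ N z ↔ ∀ S ∈ typesOf N, (x ∈ S ↔ y ∈ S ∧ z ∉ S) := by
  constructor
  · rintro h S ⟨-, u, hu⟩
    rw [← hu x, ← hu y, ← hu z, h, ZFSet.mem_sdiff]
  · intro h
    ext u
    rw [ZFSet.mem_sdiff]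
    by_cases hocc : ∃ v, u ∈ N v
    · have hS : ({v | u ∈ N v} : Set V) ∈ typesOf N :=
        ⟨hocc, u, fun v => Iff.rfl⟩
      exact h _ hS
    · push_neg at hocc
      simp [hocc x, hocc y]

theorem satisfies_congr_types {V : Type*} (N : V → ZFSet.{w}) (M : V → ZFSet.{u})
    (h : typesOf N = typesOf M) :
    ∀ Φ : BSTFormula V, Φ.Satisfies N ↔ Φ.Satisfies M := by
  intro Φ
  induction Φ with
  | atom a b c =>
    simp only [BSTFormula.Satisfies, atom_iff_types, h]
  | and f g ihf ihg => simp only [BSTFormula.Satisfies, ihf, ihg]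
  | or f g ihf ihg => simp only [BSTFormula.Satisfies, ihf, ihg]
  | not f ihf => simp only [BSTFormula.Satisfies, ihf]

/-- A model can be transferred to any universe. -/
theorem exists_model_univ {V : Type*} [Fintype V] (Ψ : BSTFormula V)
    (M : V → ZFSet.{u}) (hM : Ψ.Satisfies M) :
    ∃ N : V → ZFSet.{w}, Ψ.Satisfies N := by
  classical
  haveI : Fintype (Set V) := Fintype.ofFinite _
  set T : Set (Set V) := typesOf M with hT
  set k := Fintype.card (Set V) with hk
  set e : Set V ≃ Fin k := Fintype.equivFin (Set V) with he
  set g : Fin k → Set V := fun i => e.symm i with hg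
  set c : Fin k → ZFSet.{w} := fun i => vN i.val with hc
  have hcinj : Function.Injective c := fun i j hij => Fin.val_injective (vN_inj hij)
  set N : V → ZFSet.{w} := fun v =>
    ZFSet.range (fun p : {i : Fin k // g i ∈ T ∧ v ∈ g i} => c p.1) with hN
  have hmemN : ∀ (u : ZFSet.{w}) (v : V),
      u ∈ N v ↔ ∃ i : Fin k, (g i ∈ T ∧ v ∈ g i) ∧ c i = u := by
    intro u v
    rw [hN]
    rw [ZFSet.mem_range]
    constructor
    · rintro ⟨⟨i, hi⟩, h⟩
      exact ⟨i, hi, h⟩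
    · rintro ⟨i, hi, h⟩
      exact ⟨⟨i, hi⟩, h⟩
  refine ⟨N, (satisfies_congr_types N M ?_ Ψ).mpr hM⟩
  ext S
  constructor
  · rintro ⟨hne, u, hu⟩
    obtain ⟨v0, hv0⟩ := hne
    obtain ⟨i, ⟨hiT, hvi⟩, hci⟩ := (hmemN u v0).mp ((hu v0).mpr hv0)
    have hSgi : S = g i := by
      ext v
      rw [← hu v, hmemN u v]
      constructor
      · rintro ⟨j, ⟨hjT, hvj⟩, hcj⟩
        have : j = i := hcinj (hcj.trans hci.symm)
        exact this ▸ hvj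
      · intro hv
        exact ⟨i, ⟨hiT, hv⟩, hci⟩
    rw [hSgi]
    exact hiT
  · intro hS
    have hSne : S.Nonempty := hS.1
    have hgeS : g (e S) = S := Equiv.symm_apply_apply e S
    refine ⟨hSne, c (e S), fun v => ?_⟩
    rw [hmemN]
    constructor
    · rintro ⟨j, ⟨hjT, hvj⟩, hcj⟩
      have hj : j = e S := hcinj hcj
      rw [hj] at hvj
      rwa [hgeS] at hvj
    · intro hv
      exact ⟨e S, ⟨by rw [hgeS]; exact hS,
        by rw [hgeS]; exact hv⟩, rfl⟩

/-- Within a single universe: from any model, get one with `M x ∉ M y`. -/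
theorem exists_model_not_mem_aux {V : Type*} (Ψ : BSTFormula V)
    (M : V → ZFSet.{w}) (hM : Ψ.Satisfies M) (x y : V) :
    ∃ M' : V → ZFSet.{w}, Ψ.Satisfies M' ∧ M' x ∉ M' y := by
  classical
  set f : ZFSet.{w} → ZFSet.{w} := fun u => insert u {∅} with hf
  haveI : ZFSet.Definable₁ f :=
    ⟨fun xs => (f (.mk (xs 0))).out, fun xs => by simp⟩
  have hinj : Function.Injective f := by
    intro u u' h
    simp only [hf] at h
    have hu : u ∈ insert u' ({∅} : ZFSet.{w}) := h ▸ ZFSet.mem_insert u {∅}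
    have hu' : u' ∈ insert u ({∅} : ZFSet.{w}) := h ▸ ZFSet.mem_insert u' {∅}
    rcases ZFSet.mem_insert_iff.mp hu with h1 | h1
    · exact h1
    · rcases ZFSet.mem_insert_iff.mp hu' with h2 | h2
      · exact h2.symm
      · rw [ZFSet.mem_singleton] at h1 h2; rw [h1, h2]
  have hmem : ∀ (u s : ZFSet.{w}), f u ∈ ZFSet.image f s ↔ u ∈ s := by
    intro u s
    rw [ZFSet.mem_image]
    constructor
    · rintro ⟨w, hw, hfw⟩; rwa [hinj hfw] at hw
    · intro hu; exact ⟨u, hu, rfl⟩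
  have himg_inj : ∀ a b : ZFSet.{w}, ZFSet.image f a = ZFSet.image f b ↔ a = b := by
    intro a b
    constructor
    · intro h
      ext u
      rw [← hmem u a, ← hmem u b, h]
    · rintro rfl; rfl
  have hdiff : ∀ a b : ZFSet.{w},
      ZFSet.image f (a \ b) = ZFSet.image f a \ ZFSet.image f b := by
    intro a b
    ext u
    constructor
    · intro h
      rw [ZFSet.mem_image] at h
      obtain ⟨w, hw, rfl⟩ := h
      rw [ZFSet.mem_sdiff] at hw ⊢
      exact ⟨(hmem w a).mpr hw.1, fun hb => hw.2 ((hmem w b).mp hb)⟩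
    · intro h
      rw [ZFSet.mem_sdiff] at h
      obtain ⟨h1, h2⟩ := h
      rw [ZFSet.mem_image] at h1 ⊢
      obtain ⟨w, hw, rfl⟩ := h1
      exact ⟨w, ZFSet.mem_sdiff.mpr ⟨hw, fun hb => h2 ((hmem w b).mpr hb)⟩, rfl⟩
  set M' : V → ZFSet.{w} := fun v => ZFSet.image f (M v) with hM'
  have hsat_iff : ∀ Φ : BSTFormula V, Φ.Satisfies M' ↔ Φ.Satisfies M := by
    intro Φ
    induction Φ with
    | atom a b c =>
      simp only [BSTFormula.Satisfies, hM', ← hdiff, himg_inj]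
    | and f g ihf ihg => simp only [BSTFormula.Satisfies, ihf, ihg]
    | or f g ihf ihg => simp only [BSTFormula.Satisfies, ihf, ihg]
    | not f ihf => simp only [BSTFormula.Satisfies, ihf]
  refine ⟨M', (hsat_iff Ψ).mpr hM, ?_⟩
  intro hmem'
  rw [hM', ZFSet.mem_image] at hmem'
  obtain ⟨u, _, hu⟩ := hmem'
  have hz : (∅ : ZFSet.{w}) ∈ f u := by
    simp only [hf]
    exact ZFSet.mem_insert_iff.mpr (Or.inr (ZFSet.mem_singleton.mpr rfl))
  rw [hu, ZFSet.mem_image] at hz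
  obtain ⟨w, _, hw⟩ := hz
  have : w ∈ (∅ : ZFSet.{w}) := by
    rw [← hw]; exact ZFSet.mem_insert w {∅}
  exact ZFSet.notMem_empty w this

theorem exists_model_not_mem {V : Type*} [Fintype V] (Ψ : BSTFormula V)
    (hsat : ∃ M : V → ZFSet, Ψ.Satisfies M) :
    ∀ x y : V, ∃ M : V → ZFSet, Ψ.Satisfies M ∧ M x ∉ M y := by
  intro x y
  obtain ⟨M, hM⟩ := hsat
  obtain ⟨N, hN⟩ := exists_model_univ Ψ M hM
  exact exists_model_not_mem_aux Ψ N hN x y
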